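/- For real $s$ with $0 < s < 1$ and real $a > 0$, $\int_0^{\infty} x^{s-1} \cos(ax)\, dx = a^{-s}\, \Gamma(s) \cos(\pi s / 2)$, where the integral is interpreted as an improper Riemann integral. -/

import Mathlib

open MeasureTheory Set Real Filter

lemma mc_integrable_aux {p a : ℝ} (hp1 : -1 < p) (hp2 : p < 1) (ha : 0 < a) :
    IntegrableOn (fun t : ℝ => t ^ p / (t ^ 2 + a ^ 2)) (Ioi 0) := by
  have hmeas : AEStronglyMeasurable (fun t : ℝ => t ^ p / (t ^ 2 + a ^ 2))
      (volume.restrict (Ioi (0:ℝ))) := by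
    apply Measurable.aestronglyMeasurable; fun_prop
  rw [← Ioc_union_Ioi_eq_Ioi (zero_le_one (α := ℝ))]
  apply IntegrableOn.union
  · have hg : IntegrableOn (fun t : ℝ => t ^ p / a ^ 2) (Ioc (0:ℝ) 1) := by
      have := (intervalIntegrable_iff_integrableOn_Ioc_of_le (zero_le_one (α := ℝ))).mp
        (intervalIntegral.intervalIntegrable_rpow' hp1)
      exact this.div_const _
    refine Integrable.mono hg (hmeas.mono_set Ioc_subset_Ioi_self) ?_
    filter_upwards [ae_restrict_mem measurableSet_Ioc] with t ht
    have h0 : 0 < t := ht.1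
    rw [Real.norm_eq_abs, Real.norm_eq_abs, abs_of_nonneg (by positivity),
      abs_of_nonneg (by positivity)]
    gcongr
    nlinarith [sq_nonneg t]
  · have hg : IntegrableOn (fun t : ℝ => t ^ (p - 2)) (Ioi (1:ℝ)) :=
      integrableOn_Ioi_rpow_of_lt (by linarith) one_pos
    refine Integrable.mono hg (hmeas.mono_set (Ioi_subset_Ioi zero_le_one)) ?_
    filter_upwards [ae_restrict_mem measurableSet_Ioi] with t ht
    have h1 : (1:ℝ) < t := ht
    have h0 : (0:ℝ) < t := by linarith
    rw [Real.norm_eq_abs, Real.norm_eq_abs, abs_of_nonneg (by positivity),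
      abs_of_nonneg (by positivity)]
    rw [div_le_iff₀ (by positivity), Real.rpow_sub h0, div_mul_eq_mul_div,
      le_div_iff₀ (by positivity)]
    have h2 : t ^ (2:ℝ) = t ^ 2 := by
      rw [← Real.rpow_natCast t 2]; norm_num
    rw [h2]
    nlinarith [Real.rpow_nonneg h0.le p, sq_nonneg a]

lemma mc_inner (a t T : ℝ) (hc : 0 < t ^ 2 + a ^ 2) :
    ∫ x in (0:ℝ)..T, Real.exp (-(t*x)) * Real.cos (a*x)
      = (t + Real.exp (-(t*T)) * (a * Real.sin (a*T) - t * Real.cos (a*T))) / (t^2+a^2) := by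
  have hF : ∀ x : ℝ, HasDerivAt
      (fun x => Real.exp (-(t*x)) * (a * Real.sin (a*x) - t * Real.cos (a*x)) / (t^2+a^2))
      (Real.exp (-(t*x)) * Real.cos (a*x)) x := by
    intro x
    have hg : HasDerivAt (fun x : ℝ => Real.exp (-(t*x))) (Real.exp (-(t*x)) * (-t)) x := by
      simpa using (((hasDerivAt_id x).const_mul t).neg).exp
    have hsin : HasDerivAt (fun x : ℝ => Real.sin (a*x)) (Real.cos (a*x) * a) x := by
      simpa using ((hasDerivAt_id x).const_mul a).sin
    have hcos : HasDerivAt (fun x : ℝ => Real.cos (a*x)) (-Real.sin (a*x) * a) x := by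
      simpa using ((hasDerivAt_id x).const_mul a).cos
    have hh : HasDerivAt (fun x : ℝ => a * Real.sin (a*x) - t * Real.cos (a*x))
        (a * (Real.cos (a*x) * a) - t * (-Real.sin (a*x) * a)) x :=
      (hsin.const_mul a).sub (hcos.const_mul t)
    have := (hg.mul hh).div_const (t^2+a^2)
    refine this.congr_deriv ?_
    rw [div_eq_iff hc.ne']
    ring
  rw [intervalIntegral.integral_eq_sub_of_hasDerivAt (fun x _ => hF x)
    ((Continuous.mul (by fun_prop) (by fun_prop)).intervalIntegrable 0 T)]
  simp
  ring

lemma mc_kernel {s : ℝ} (hs1 : s < 1) {x : ℝ} (hx : 0 < x) :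
    ∫ t in Ioi (0:ℝ), t ^ (-s) * Real.exp (-(x*t)) = Real.Gamma (1-s) * x ^ (s-1) := by
  have h := Real.integral_rpow_mul_exp_neg_mul_Ioi (a := 1-s) (by linarith) hx
  rw [show (1:ℝ)-s-1 = -s by ring] at h
  rw [h, one_div, ← Real.rpow_neg_one x, ← Real.rpow_mul hx.le, mul_comm]
  ring_nf

lemma mc_kernel_integrable {s : ℝ} (hs1 : s < 1) {x : ℝ} (hx : 0 < x) :
    IntegrableOn (fun t : ℝ => t ^ (-s) * Real.exp (-(x*t))) (Ioi 0) := by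
  have h := integrableOn_rpow_mul_exp_neg_mul_rpow (s := -s) (p := 1) (b := x)
    (by linarith) one_pos hx
  refine h.congr_fun (fun t ht => ?_) measurableSet_Ioi
  simp only [Real.rpow_one]; ring_nf

lemma mc_exp_int {b : ℝ} (hb : 0 < b) :
    ∫ y in Ioi (0:ℝ), Real.exp (-(b*y)) = 1/b := by
  have h := Real.integral_rpow_mul_exp_neg_mul_Ioi (a := 1) one_pos hb
  simp only [sub_self, Real.rpow_zero, one_mul, Real.Gamma_one, Real.rpow_one, mul_one] at h
  exact h

lemma mc_exp_integrable {b : ℝ} (hb : 0 < b) :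
    IntegrableOn (fun y : ℝ => Real.exp (-(b*y))) (Ioi 0) := by
  have := exp_neg_integrableOn_Ioi 0 hb
  refine this.congr_fun (fun t ht => by simp only [neg_mul]) measurableSet_Ioi

lemma mc_fubini {s a : ℝ} (hs : 0 < s) (hs1 : s < 1) {T : ℝ} (hT : 0 ≤ T) :
    ∫ x in (0:ℝ)..T, x ^ (s-1) * Real.cos (a*x)
      = (Real.Gamma (1-s))⁻¹ *
        ∫ t in Ioi (0:ℝ), t ^ (-s) * ∫ x in (0:ℝ)..T, Real.exp (-(x*t)) * Real.cos (a*x) := by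
  have hΓ : 0 < Real.Gamma (1-s) := Real.Gamma_pos_of_pos (by linarith)
  set f : ℝ → ℝ → ℝ := fun x t => t ^ (-s) * (Real.exp (-(x*t)) * Real.cos (a*x)) with hf
  have hint : Integrable (Function.uncurry f)
      ((volume.restrict (Ioc 0 T)).prod (volume.restrict (Ioi 0))) := by
    rw [integrable_prod_iff]
    · constructor
      · filter_upwards [ae_restrict_mem measurableSet_Ioc] with x hx
        have := (mc_kernel_integrable hs1 hx.1).mul_const (Real.cos (a*x))
        exact IntegrableOn.congr_fun this (fun t ht => by simp only [hf, Function.uncurry]; ring) measurableSet_Ioi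
      · have heq : ∀ x ∈ Ioc (0:ℝ) T, (∫ t in Ioi (0:ℝ), ‖f x t‖)
            = Real.Gamma (1-s) * x ^ (s-1) * |Real.cos (a*x)| := by
          intro x hx
          have : ∀ t ∈ Ioi (0:ℝ), ‖f x t‖
              = t ^ (-s) * Real.exp (-(x*t)) * |Real.cos (a*x)| := by
            intro t ht
            rw [hf]
            simp only [Real.norm_eq_abs, abs_mul]
            rw [abs_of_nonneg (Real.rpow_nonneg (le_of_lt ht) _),
              abs_of_nonneg (Real.exp_nonneg _)]
            ring
          rw [setIntegral_congr_fun measurableSet_Ioi this, integral_mul_const,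
            mc_kernel hs1 hx.1]
        have h2 : Integrable (fun x : ℝ => Real.Gamma (1-s) * x ^ (s-1) * |Real.cos (a*x)|)
            (volume.restrict (Ioc 0 T)) := by
          have hg : IntegrableOn (fun x : ℝ => Real.Gamma (1-s) * x ^ (s-1)) (Ioc 0 T) := by
            have := (intervalIntegrable_iff_integrableOn_Ioc_of_le hT).mp
              (intervalIntegral.intervalIntegrable_rpow' (by linarith : (-1:ℝ) < s-1))
            exact this.const_mul _
          refine Integrable.mono hg ?_ ?_
          · apply Measurable.aestronglyMeasurable; fun_prop
          · filter_upwards [ae_restrict_mem measurableSet_Ioc] with x hx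
            have h0 : 0 < x := hx.1
            rw [Real.norm_eq_abs, Real.norm_eq_abs, abs_mul, abs_mul, abs_of_nonneg hΓ.le,
              abs_of_nonneg (Real.rpow_nonneg h0.le _), abs_abs]
            nlinarith [abs_cos_le_one (a*x), abs_nonneg (Real.cos (a*x)),
              mul_nonneg hΓ.le (Real.rpow_nonneg h0.le (s-1))]
        refine h2.congr ?_
        filter_upwards [ae_restrict_mem measurableSet_Ioc] with x hx
        exact (heq x hx).symm
    · apply Measurable.aestronglyMeasurable
      simp only [Function.uncurry, hf]
      fun_prop
  have swap := integral_integral_swap hint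
  rw [intervalIntegral.integral_of_le hT]
  calc ∫ x in Ioc (0:ℝ) T, x ^ (s-1) * Real.cos (a*x)
      = ∫ x in Ioc (0:ℝ) T, (Real.Gamma (1-s))⁻¹ * ∫ t in Ioi (0:ℝ), f x t := by
        refine setIntegral_congr_fun measurableSet_Ioc (fun x hx => ?_)
        have h1 : ∫ t in Ioi (0:ℝ), f x t
            = (∫ t in Ioi (0:ℝ), t ^ (-s) * Real.exp (-(x*t))) * Real.cos (a*x) := by
          rw [← integral_mul_const]
          refine setIntegral_congr_fun measurableSet_Ioi (fun t ht => by rw [hf]; ring)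
        rw [h1, mc_kernel hs1 hx.1]
        field_simp
    _ = (Real.Gamma (1-s))⁻¹ * ∫ x in Ioc (0:ℝ) T, ∫ t in Ioi (0:ℝ), f x t := integral_const_mul _ _
    _ = (Real.Gamma (1-s))⁻¹ * ∫ t in Ioi (0:ℝ), ∫ x in Ioc (0:ℝ) T, f x t := by rw [swap]
    _ = (Real.Gamma (1-s))⁻¹ *
        ∫ t in Ioi (0:ℝ), t ^ (-s) * ∫ x in (0:ℝ)..T, Real.exp (-(x*t)) * Real.cos (a*x) := by
        congr 1
        refine setIntegral_congr_fun measurableSet_Ioi (fun t ht => ?_)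
        rw [intervalIntegral.integral_of_le hT, ← integral_const_mul]

lemma mc_J {s a : ℝ} (hs : 0 < s) (hs1 : s < 1) (ha : 0 < a) :
    ∫ t in Ioi (0:ℝ), t ^ (1-s) / (t^2 + a^2)
      = a ^ (-s) * π / (2 * Real.sin (π * s / 2)) := by
  have hpos : ∀ t : ℝ, 0 < t^2 + a^2 := fun t => by positivity
  have hIy : ∀ t ∈ Ioi (0:ℝ), (∫ y in Ioi (0:ℝ), t ^ (1-s) * Real.exp (-((t^2+a^2)*y)))
      = t ^ (1-s) / (t^2+a^2) := by
    intro t ht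
    rw [integral_const_mul, mc_exp_int (hpos t)]
    ring
  have hmeas : AEStronglyMeasurable
      (Function.uncurry (fun t y : ℝ => t ^ (1-s) * Real.exp (-((t^2+a^2)*y))))
      ((volume.restrict (Ioi (0:ℝ))).prod (volume.restrict (Ioi (0:ℝ)))) := by
    apply Measurable.aestronglyMeasurable
    unfold Function.uncurry
    fun_prop
  have hint : Integrable
      (Function.uncurry (fun t y : ℝ => t ^ (1-s) * Real.exp (-((t^2+a^2)*y))))
      ((volume.restrict (Ioi (0:ℝ))).prod (volume.restrict (Ioi (0:ℝ)))) := by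
    refine (integrable_prod_iff hmeas).mpr ⟨?_, ?_⟩
    · filter_upwards [ae_restrict_mem measurableSet_Ioi] with t ht
      simp only [Function.uncurry_apply_pair]
      exact (mc_exp_integrable (hpos t)).const_mul _
    · have h2 : Integrable (fun t : ℝ => t ^ (1-s) / (t^2+a^2))
          (volume.restrict (Ioi (0:ℝ))) := mc_integrable_aux (by linarith) (by linarith) ha
      refine h2.congr ?_
      filter_upwards [ae_restrict_mem measurableSet_Ioi] with t ht
      rw [← hIy t ht]
      refine (setIntegral_congr_fun measurableSet_Ioi (fun y hy => ?_)).symm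
      rw [Function.uncurry_apply_pair, Real.norm_eq_abs, abs_of_nonneg]
      have h0 : (0:ℝ) < t := ht
      positivity
  have swap := integral_integral_swap hint
  have hIt : ∀ y ∈ Ioi (0:ℝ), (∫ t in Ioi (0:ℝ), t ^ (1-s) * Real.exp (-((t^2+a^2)*y)))
      = Real.exp (-(a^2*y)) * (y ^ (-(2-s)/2) * (1/2) * Real.Gamma ((2-s)/2)) := by
    intro y hy
    have hy0 : (0:ℝ) < y := hy
    have key := integral_rpow_mul_exp_neg_mul_rpow (p := 2) (q := 1-s) (b := y)
      two_pos (by linarith) hy0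
    rw [show (1-s+1)/2 = (2-s)/2 by ring, show -(1-s+1)/2 = -(2-s)/2 by ring] at key
    rw [← key, ← integral_const_mul]
    refine setIntegral_congr_fun measurableSet_Ioi (fun t ht => ?_)
    have h2 : t ^ ((2:ℝ)) = t ^ (2:ℕ) := by
      rw [show (2:ℝ) = ((2:ℕ):ℝ) by norm_num, Real.rpow_natCast]
    rw [show -((t^2+a^2)*y) = -(a^2*y) + (-y * t^(2:ℝ)) by rw [h2]; ring,
      Real.exp_add]
    ring
  have rhs : (∫ y in Ioi (0:ℝ), ∫ t in Ioi (0:ℝ), t ^ (1-s) * Real.exp (-((t^2+a^2)*y)))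
      = (1/2) * Real.Gamma ((2-s)/2) * ((1/a^2) ^ (s/2) * Real.Gamma (s/2)) := by
    rw [setIntegral_congr_fun measurableSet_Ioi hIt]
    have key := Real.integral_rpow_mul_exp_neg_mul_Ioi (a := s/2) (r := a^2)
      (by linarith) (by positivity)
    rw [← key, ← integral_const_mul]
    refine setIntegral_congr_fun measurableSet_Ioi (fun y hy => ?_)
    rw [show s/2 - 1 = -(2-s)/2 by ring]
    ring
  have lhs : (∫ t in Ioi (0:ℝ), t ^ (1-s) / (t^2 + a^2))
      = ∫ t in Ioi (0:ℝ), ∫ y in Ioi (0:ℝ), t ^ (1-s) * Real.exp (-((t^2+a^2)*y)) :=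
    (setIntegral_congr_fun measurableSet_Ioi (fun t ht => (hIy t ht).symm))
  rw [lhs, swap, rhs]
  have hrefl := Real.Gamma_mul_Gamma_one_sub (s/2)
  rw [show (1:ℝ) - s/2 = (2-s)/2 by ring, show π * (s/2) = π * s / 2 by ring] at hrefl
  have hA : ((1:ℝ)/a^2) ^ (s/2) = a ^ (-s) := by
    rw [one_div, ← Real.rpow_natCast a 2, ← Real.rpow_neg ha.le, ← Real.rpow_mul ha.le]
    norm_num
    congr 1
    ring
  rw [hA, show (1:ℝ)/2 * Real.Gamma ((2-s)/2) * (a ^ (-s) * Real.Gamma (s/2))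
      = (1:ℝ)/2 * (Real.Gamma (s/2) * Real.Gamma ((2-s)/2)) * a ^ (-s) by ring, hrefl]
  rw [mul_comm (2:ℝ) (Real.sin (π*s/2)), div_mul_eq_div_div, div_div]
  ring

lemma mc_limit {s a : ℝ} (hs : 0 < s) (hs1 : s < 1) (ha : 0 < a) :
    Tendsto (fun T : ℝ => ∫ t in Ioi (0:ℝ), t ^ (-s) *
        ((t + Real.exp (-(t*T)) * (a * Real.sin (a*T) - t * Real.cos (a*T))) / (t^2+a^2)))
      atTop (nhds (∫ t in Ioi (0:ℝ), t ^ (1-s) / (t^2 + a^2))) := by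
  have hrpow : ∀ t : ℝ, 0 < t → t ^ (-s) * t = t ^ (1-s) := by
    intro t ht
    rw [show (1:ℝ)-s = -s + 1 by ring, Real.rpow_add ht, Real.rpow_one]
  apply tendsto_integral_filter_of_dominated_convergence
    (bound := fun t : ℝ => t ^ (-s) * ((2*t + a) / (t^2+a^2)))
  · filter_upwards with T
    apply Measurable.aestronglyMeasurable
    fun_prop
  · filter_upwards [eventually_ge_atTop (0:ℝ)] with T hT
    filter_upwards [ae_restrict_mem measurableSet_Ioi] with t ht
    have h0 : (0:ℝ) < t := ht
    have hd : (0:ℝ) < t^2 + a^2 := by positivity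
    rw [Real.norm_eq_abs, abs_mul, abs_of_nonneg (Real.rpow_nonneg h0.le _), abs_div,
      abs_of_nonneg hd.le]
    gcongr
    have he : Real.exp (-(t*T)) ≤ 1 := by
      rw [Real.exp_le_one_iff]
      nlinarith
    have h1 : |a * Real.sin (a*T) - t * Real.cos (a*T)| ≤ a + t := by
      refine (abs_sub _ _).trans ?_
      rw [abs_mul, abs_mul, abs_of_nonneg ha.le, abs_of_nonneg h0.le]
      nlinarith [abs_sin_le_one (a*T), abs_cos_le_one (a*T), abs_nonneg (Real.sin (a*T)),
        abs_nonneg (Real.cos (a*T))]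
    calc |t + Real.exp (-(t*T)) * (a * Real.sin (a*T) - t * Real.cos (a*T))|
        ≤ |t| + |Real.exp (-(t*T)) * (a * Real.sin (a*T) - t * Real.cos (a*T))| := abs_add_le _ _
      _ ≤ 2*t + a := by
          rw [abs_of_nonneg h0.le, abs_mul, abs_of_nonneg (Real.exp_nonneg _)]
          nlinarith [abs_nonneg (a * Real.sin (a*T) - t * Real.cos (a*T)),
            Real.exp_nonneg (-(t*T))]
  · have i1 := (mc_integrable_aux (p := 1-s) (by linarith) (by linarith) ha).const_mul 2
    have i2 := (mc_integrable_aux (p := -s) (by linarith) (by linarith) ha).const_mul a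
    refine (i1.add i2).congr ?_
    filter_upwards [ae_restrict_mem measurableSet_Ioi] with t ht
    have h0 : (0:ℝ) < t := ht
    have hd : (0:ℝ) < t^2 + a^2 := by positivity
    simp only [Pi.add_apply]
    rw [← hrpow t h0]
    field_simp
  · filter_upwards [ae_restrict_mem measurableSet_Ioi] with t ht
    have h0 : (0:ℝ) < t := ht
    have hd : (0:ℝ) < t^2 + a^2 := by positivity
    have hE : Tendsto (fun T : ℝ => Real.exp (-(t*T)) * (a * Real.sin (a*T) - t * Real.cos (a*T)))
        atTop (nhds 0) := by
      apply squeeze_zero_norm (a := fun T : ℝ => (a + t) * Real.exp (-(t*T)))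
      · intro T
        rw [Real.norm_eq_abs, abs_mul, abs_of_nonneg (Real.exp_nonneg _)]
        have h1 : |a * Real.sin (a*T) - t * Real.cos (a*T)| ≤ a + t := by
          refine (abs_sub _ _).trans ?_
          rw [abs_mul, abs_mul, abs_of_nonneg ha.le, abs_of_nonneg h0.le]
          nlinarith [abs_sin_le_one (a*T), abs_cos_le_one (a*T), abs_nonneg (Real.sin (a*T)),
            abs_nonneg (Real.cos (a*T))]
        nlinarith [Real.exp_nonneg (-(t*T))]
      · have h2 : Tendsto (fun T : ℝ => -(t*T)) atTop atBot :=
          tendsto_neg_atBot_iff.mpr (Tendsto.const_mul_atTop h0 tendsto_id)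
        have h3 := (Real.tendsto_exp_atBot.comp h2).const_mul (a + t)
        simpa using h3
    have hmain : Tendsto (fun T : ℝ => t ^ (-s) *
        ((t + Real.exp (-(t*T)) * (a * Real.sin (a*T) - t * Real.cos (a*T))) / (t^2+a^2)))
        atTop (nhds (t ^ (-s) * ((t + 0) / (t^2+a^2)))) :=
      (((hE.const_add t).div_const _).const_mul _)
    rw [add_zero] at hmain
    have : t ^ (-s) * (t / (t^2+a^2)) = t ^ (1-s) / (t^2+a^2) := by
      rw [← hrpow t h0]; ring
    rwa [this] at hmain

open Filter Real in
theorem mellin_cos (s a : ℝ) (hs : 0 < s) (hs1 : s < 1) (ha : 0 < a) :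
    Tendsto (fun T : ℝ => ∫ x in (0 : ℝ)..T, x ^ (s - 1) * Real.cos (a * x)) atTop
      (nhds (a ^ (-s) * Real.Gamma s * Real.cos (π * s / 2))) := by
  have hΓpos : 0 < Real.Gamma (1-s) := Real.Gamma_pos_of_pos (by linarith)
  have hpi := Real.pi_pos
  have hsin : 0 < Real.sin (π * s / 2) := by
    apply Real.sin_pos_of_pos_of_lt_pi
    · positivity
    · nlinarith
  have hcos : 0 < Real.cos (π * s / 2) := by
    apply Real.cos_pos_of_mem_Ioo
    constructor
    · nlinarith
    · nlinarith
  have hval : (Real.Gamma (1-s))⁻¹ * (a ^ (-s) * π / (2 * Real.sin (π * s / 2)))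
      = a ^ (-s) * Real.Gamma s * Real.cos (π * s / 2) := by
    have h2 := Real.Gamma_mul_Gamma_one_sub s
    have h1 : Real.sin (π*s) = 2 * Real.sin (π*s/2) * Real.cos (π*s/2) := by
      rw [show π*s = 2*(π*s/2) by ring, Real.sin_two_mul]
      ring
    have hsin2 : Real.sin (π*s) ≠ 0 := by
      rw [h1]
      positivity
    rw [h1] at h2
    rw [eq_div_iff (by positivity : (2:ℝ) * Real.sin (π*s/2) * Real.cos (π*s/2) ≠ 0)] at h2
    rw [inv_mul_eq_div, div_eq_iff hΓpos.ne', div_eq_iff (by positivity)]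
    linear_combination (-(a ^ (-s))) * h2
  have hG := (mc_limit hs hs1 ha).const_mul (Real.Gamma (1-s))⁻¹
  rw [mc_J hs hs1 ha, hval] at hG
  apply hG.congr'
  filter_upwards [eventually_ge_atTop (0:ℝ)] with T hT
  rw [mc_fubini hs hs1 hT]
  congr 1
  refine setIntegral_congr_fun measurableSet_Ioi (fun t ht => ?_)
  have h0 : (0:ℝ) < t := ht
  congr 1
  rw [intervalIntegral.integral_congr
    (fun x _ => by rw [mul_comm x t] :
      ∀ x ∈ Set.uIcc (0:ℝ) T, Real.exp (-(x*t)) * Real.cos (a*x)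
        = Real.exp (-(t*x)) * Real.cos (a*x))]
  exact (mc_inner a t T (by positivity)).symm
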